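/- arXiv:2410.10623 — 2 statements merged into one kernel-verified Lean document; each statement's English description precedes it below -/
import Mathlib

section
/- Let h, x* ∈ R^n with ‖h‖ ≤ R‖x*‖, and H = 6hhᵀ + 6h x*ᵀ + 6 x* hᵀ + 4 x* x*ᵀ + 3‖h‖² I_n + 6(hᵀx*) I_n + 2‖x*‖² I_n. Then x*ᵀ H x* ≥ (6 − 18R)‖x*‖⁴. -/
open Matrix

/-- Lower bound on the Hessian quadratic form in the signal direction:
with `‖h‖ ≤ R‖x*‖`, `x*ᵀ H x* ≥ (6 − 18R)‖x*‖⁴` where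
`H = 6hhᵀ + 6h x*ᵀ + 6 x* hᵀ + 4 x* x*ᵀ + 3‖h‖² I + 6(hᵀx*) I + 2‖x*‖² I`. -/
theorem stmt8 {n : ℕ} (R : ℝ)
    (h xstar : EuclideanSpace ℝ (Fin n)) (hh : ‖h‖ ≤ R * ‖xstar‖)
    (H : Matrix (Fin n) (Fin n) ℝ)
    (hH : H = Matrix.of fun i j =>
      6 * h i * h j + 6 * h i * xstar j + 6 * xstar i * h j + 4 * xstar i * xstar j
        + (3 * ‖h‖^2 + 6 * (inner ℝ h xstar : ℝ) + 2 * ‖xstar‖^2) * (if i = j then 1 else 0)) :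
    (∑ i, ∑ j, xstar i * H i j * xstar j) ≥ (6 - 18 * R) * ‖xstar‖^4 := by
  set s : ℝ := ∑ j, h j * xstar j with hs
  set t : ℝ := ∑ j, xstar j * xstar j with ht
  set c : ℝ := 3 * ‖h‖^2 + 6 * (inner ℝ h xstar : ℝ) + 2 * ‖xstar‖^2 with hc
  have hsinner : (inner ℝ h xstar : ℝ) = s := by
    simp [hs, PiLp.inner_apply, RCLike.inner_apply, mul_comm]
  have htnorm : ‖xstar‖^2 = t := by
    rw [← real_inner_self_eq_norm_sq]
    simp only [ht, PiLp.inner_apply, RCLike.inner_apply, conj_trivial]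
  have key : (∑ i, ∑ j, xstar i * H i j * xstar j)
      = 6*s*s + 6*s*t + 6*t*s + 4*t*t + c*t := by
    subst hH
    have row : ∀ i, (∑ j, xstar i * (Matrix.of fun i j =>
        6 * h i * h j + 6 * h i * xstar j + 6 * xstar i * h j + 4 * xstar i * xstar j
          + c * (if i = j then 1 else 0)) i j * xstar j)
        = 6*(xstar i*h i)*s + 6*(xstar i*h i)*t + 6*(xstar i*xstar i)*s
          + 4*(xstar i*xstar i)*t + c*(xstar i*xstar i) := by
      intro i
      have inner_eq : (∑ j, xstar i * (Matrix.of fun i j =>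
          6 * h i * h j + 6 * h i * xstar j + 6 * xstar i * h j + 4 * xstar i * xstar j
            + c * (if i = j then 1 else 0)) i j * xstar j)
          = ∑ j, (6*(xstar i*h i)*(h j*xstar j) + 6*(xstar i*h i)*(xstar j*xstar j)
              + 6*(xstar i*xstar i)*(h j*xstar j) + 4*(xstar i*xstar i)*(xstar j*xstar j)
              + c*(if i = j then xstar i*xstar j else 0)) := by
        refine Finset.sum_congr rfl fun j _ => ?_
        simp only [Matrix.of_apply]
        by_cases hij : i = j
        · subst hij; simp only [eq_self_iff_true, if_true, mul_one]; ring
        · simp only [if_neg hij, mul_zero, add_zero]; ring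
      rw [inner_eq]
      simp only [Finset.sum_add_distrib, ← Finset.mul_sum, Finset.sum_ite_eq,
        Finset.mem_univ, if_true]
      rw [← hs, ← ht]
    rw [Finset.sum_congr rfl fun i _ => row i]
    simp only [Finset.sum_add_distrib, ← Finset.sum_mul, ← Finset.mul_sum]
    have hxh : (∑ i, xstar i * h i) = s := by
      rw [hs]; exact Finset.sum_congr rfl fun i _ => mul_comm _ _
    rw [hxh, ← ht]
  rw [key]
  have hX : (0:ℝ) ≤ ‖xstar‖ := norm_nonneg _
  have hHn : (0:ℝ) ≤ ‖h‖ := norm_nonneg _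
  have hinner : |(inner ℝ h xstar : ℝ)| ≤ ‖h‖ * ‖xstar‖ := abs_real_inner_le_norm h xstar
  have hslb : -(‖h‖ * ‖xstar‖) ≤ s := by
    rw [← hsinner]; exact neg_le_of_abs_le hinner
  have hsub : |s| ≤ ‖h‖ * ‖xstar‖ := by rw [← hsinner]; exact hinner
  have ht0 : (0:ℝ) ≤ t := by rw [← htnorm]; positivity
  have hhsq : (0:ℝ) ≤ ‖h‖^2 := sq_nonneg _
  have hc_expand : c = 3 * ‖h‖^2 + 6 * s + 2 * t := by rw [hc, hsinner, htnorm]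
  rw [hc_expand, ← htnorm]
  nlinarith [sq_nonneg s, sq_nonneg ‖xstar‖, mul_le_mul_of_nonneg_right hh hX,
    mul_le_mul_of_nonneg_right (mul_le_mul_of_nonneg_right hh hX) (sq_nonneg ‖xstar‖),
    neg_le_of_abs_le hsub, sq_nonneg (‖h‖ * ‖xstar‖),
    mul_nonneg hhsq (sq_nonneg ‖xstar‖), sq_nonneg ‖h‖]
end

section
/- Let f: R^n → R be twice differentiable, α-strongly convex and β-smooth on a convex set containing the segment from x_t to x*, with ∇f(x*) = 0. If x_{t+1} = x_t − η g where η ≤ 2/(α+β) and ‖g − ∇f(x_t)‖ ≤ A‖x_t − x*‖ + B, then ‖x_{t+1} − x*‖ ≤ (√(1 − 2ηαβ/(α+β)) + ηA)‖x_t − x*‖ + ηB. -/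
open MeasureTheory

local notation "⟪" x ", " y "⟫" => @inner ℝ _ _ x y

section aux
variable {E : Type*} [NormedAddCommGroup E] [InnerProductSpace ℝ E]

/-- A symmetric operator whose quadratic form is bounded by `m‖v‖²` has operator norm `≤ m`. -/
lemma opnorm_le_of_symm_quadform (P : E →L[ℝ] E) (m : ℝ) (hm : 0 ≤ m)
    (hsymm : ∀ u v : E, ⟪P u, v⟫ = ⟪P v, u⟫)
    (hq : ∀ v : E, |⟪P v, v⟫| ≤ m * ‖v‖ ^ 2) : ‖P‖ ≤ m := by
  refine P.opNorm_le_bound hm fun v => ?_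
  rcases eq_or_ne (P v) 0 with h0 | h0
  · rw [h0, norm_zero]; positivity
  have hv : v ≠ 0 := by rintro rfl; simp at h0
  have hvn : 0 < ‖v‖ := norm_pos_iff.2 hv
  have hun : 0 < ‖P v‖ := norm_pos_iff.2 h0
  have key : ∀ a b : E, 4 * ⟪P a, b⟫ ≤ 2 * m * (‖a‖ ^ 2 + ‖b‖ ^ 2) := by
    intro a b
    have e1 : ⟪P (a + b), a + b⟫ - ⟪P (a - b), a - b⟫ = 4 * ⟪P a, b⟫ := by
      have hba : ⟪P b, a⟫ = ⟪P a, b⟫ := hsymm b a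
      simp only [map_add, map_sub, inner_add_left, inner_add_right, inner_sub_left,
        inner_sub_right]
      linarith
    have e2 : ‖a + b‖ ^ 2 + ‖a - b‖ ^ 2 = 2 * (‖a‖ ^ 2 + ‖b‖ ^ 2) := by
      have := norm_add_sq_real a b
      have := norm_sub_sq_real a b
      linarith
    have h1 := (abs_le.1 (hq (a + b))).2
    have h2 := (abs_le.1 (hq (a - b))).1
    nlinarith [e1, e2]
  set t := Real.sqrt (‖P v‖ / ‖v‖) with ht
  have htpos : 0 < t := Real.sqrt_pos.2 (by positivity)
  have ht2 : t ^ 2 = ‖P v‖ / ‖v‖ := Real.sq_sqrt (by positivity)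
  have hinner : ⟪P (t • v), t⁻¹ • (P v)⟫ = ‖P v‖ ^ 2 := by
    rw [_root_.map_smul, real_inner_smul_left, real_inner_smul_right, real_inner_self_eq_norm_sq]
    field_simp
  have hna : ‖t • v‖ ^ 2 = ‖P v‖ * ‖v‖ := by
    rw [norm_smul, mul_pow, Real.norm_eq_abs, sq_abs, ht2]
    field_simp
  have hnb : ‖t⁻¹ • (P v)‖ ^ 2 = ‖P v‖ * ‖v‖ := by
    rw [norm_smul, mul_pow, Real.norm_eq_abs, sq_abs, inv_pow, ht2]
    field_simp
  have := key (t • v) (t⁻¹ • (P v))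
  rw [hinner, hna, hnb] at this
  nlinarith
end aux

section sym
variable {E : Type*} [NormedAddCommGroup E] [InnerProductSpace ℝ E] [CompleteSpace E]

open Filter Topology

lemma hessian_symm (f : E → ℝ) (x : E) (α : ℝ) (hα : 0 < α)
    (hdx : DifferentiableAt ℝ f x)
    (hd2 : DifferentiableAt ℝ (gradient f) x)
    (hlow : ∀ v : E, α * ‖v‖ ^ 2 ≤ ⟪(fderiv ℝ (gradient f) x) v, v⟫)
    (u v : E) :
    ⟪(fderiv ℝ (gradient f) x) u, v⟫ = ⟪(fderiv ℝ (gradient f) x) v, u⟫ := by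
  set H := fderiv ℝ (gradient f) x with hHdef
  have hH : HasFDerivAt (gradient f) H x := hd2.hasFDerivAt
  have hHlow : ∀ w : E, α * ‖w‖ ≤ ‖H w‖ := by
    intro w
    rcases eq_or_ne w 0 with rfl | hw
    · simp
    · have h1 := hlow w
      have h2 : ⟪H w, w⟫ ≤ ‖H w‖ * ‖w‖ := real_inner_le_norm _ _
      have hwpos : 0 < ‖w‖ := norm_pos_iff.2 hw
      nlinarith
  have hev : ∀ᶠ y in 𝓝 x, DifferentiableAt ℝ f y := by
    by_contra hcon
    rw [Filter.not_eventually] at hcon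
    have hne : (𝓝[{y | ¬ DifferentiableAt ℝ f y}] x).NeBot :=
      mem_closure_iff_nhdsWithin_neBot.1 (mem_closure_iff_frequently.2 hcon)
    set l := 𝓝[{y | ¬ DifferentiableAt ℝ f y}] x with hl
    have hbad : ∀ᶠ y in l, ¬ DifferentiableAt ℝ f y := eventually_mem_nhdsWithin
    have hgrad0 : ∀ᶠ y in l, gradient f y = 0 :=
      hbad.mono fun y hy => gradient_eq_zero_of_not_differentiableAt hy
    have hlo : ∀ᶠ y in l, ‖gradient f y - gradient f x - H (y - x)‖ ≤ α / 2 * ‖y - x‖ :=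
      Filter.Eventually.filter_mono nhdsWithin_le_nhds (hH.isLittleO.def (by positivity))
    have t1 : Tendsto (fun y : E => ‖y - x‖) l (𝓝 0) := by
      have h : Tendsto (fun y : E => ‖y - x‖) (𝓝 x) (𝓝 ‖x - x‖) :=
        (continuous_norm.comp (continuous_id.sub (continuous_const : Continuous fun _ : E => x))).tendsto x
      simpa using h.mono_left nhdsWithin_le_nhds
    have hbnd : ∀ᶠ y in l, ‖gradient f x‖ ≤ α / 2 * ‖y - x‖ + ‖H‖ * ‖y - x‖ := by
      filter_upwards [hgrad0, hlo] with y h0 hy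
      have e : gradient f x = -(gradient f y - gradient f x - H (y - x)) - H (y - x) := by
        rw [h0]; abel
      rw [e]
      refine (norm_sub_le _ _).trans (add_le_add ?_ (H.le_opNorm _))
      rwa [norm_neg]
    have htend : Tendsto (fun y : E => α / 2 * ‖y - x‖ + ‖H‖ * ‖y - x‖) l (𝓝 0) := by
      have := (t1.const_mul (α / 2)).add (t1.const_mul ‖H‖)
      simpa using this
    have hgx0 : gradient f x = 0 :=
      norm_le_zero_iff.1 (ge_of_tendsto htend hbnd)
    have hcontr : ∀ᶠ y in l, False := by
      filter_upwards [hgrad0, hlo, hbad] with y h0 hy hb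
      rw [h0, hgx0] at hy
      have h1 : α * ‖y - x‖ ≤ ‖H (y - x)‖ := hHlow _
      have h2 : ‖H (y - x)‖ ≤ α / 2 * ‖y - x‖ := by
        have : ‖(0 : E) - 0 - H (y - x)‖ = ‖H (y - x)‖ := by rw [sub_self, zero_sub, norm_neg]
        rwa [this] at hy
      have h3 : ‖y - x‖ ≤ 0 := by nlinarith
      have h4 : y = x := sub_eq_zero.1 (norm_le_zero_iff.1 h3)
      rw [h4] at hb
      exact hb hdx
    rcases hcontr.exists with ⟨_, h⟩
    exact h
  have hrep : ∀ y : E, DifferentiableAt ℝ f y → HasFDerivAt f (innerSL ℝ (gradient f y)) y := by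
    intro y hy
    have h1 : HasFDerivAt f (fderiv ℝ f y) y := hy.hasFDerivAt
    have h2 : fderiv ℝ f y = innerSL ℝ (gradient f y) := by
      ext w
      simp [gradient, InnerProductSpace.toDual_symm_apply, innerSL_apply_apply]
    rwa [h2] at h1
  have hf' : ∀ᶠ y in 𝓝 x, HasFDerivAt f (innerSL ℝ (gradient f y)) y :=
    hev.mono fun y hy => hrep y hy
  have hcomp : HasFDerivAt (fun y => innerSL ℝ (gradient f y)) ((innerSL ℝ).comp H) x :=
    ((innerSL ℝ).hasFDerivAt).comp x hH
  have hsym := second_derivative_symmetric_of_eventually hf' hcomp u v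
  simpa using hsym

end sym

/-- Robust gradient descent contraction: if `f` is twice differentiable with
`α I ⪯ ∇²f ⪯ β I` on a convex set containing the segment from `xt` to `x*`,
`∇f(x*) = 0`, `x_{t+1} = x_t − η g` with `η ≤ 2/(α+β)` and
`‖g − ∇f(x_t)‖ ≤ A‖x_t − x*‖ + B`, then
`‖x_{t+1} − x*‖ ≤ (√(1 − 2ηαβ/(α+β)) + ηA)‖x_t − x*‖ + ηB`. -/
theorem stmt9 {n : ℕ} (f : EuclideanSpace ℝ (Fin n) → ℝ)
    (s : Set (EuclideanSpace ℝ (Fin n))) (hs : Convex ℝ s)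
    (α β η A B : ℝ) (hα : 0 < α) (hβ : 0 < β) (hηpos : 0 < η)
    (hη : η ≤ 2 / (α + β)) (hA : 0 ≤ A) (hB : 0 ≤ B)
    (xt xstar : EuclideanSpace ℝ (Fin n)) (hseg : segment ℝ xt xstar ⊆ s)
    (hdiff : ∀ x ∈ s, DifferentiableAt ℝ f x)
    (hdiff2 : ∀ x ∈ s, DifferentiableAt ℝ (gradient f) x)
    (hhess : ∀ x ∈ s, ∀ v : EuclideanSpace ℝ (Fin n),
      α * ‖v‖^2 ≤ (inner ℝ ((fderiv ℝ (gradient f) x) v) v : ℝ) ∧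
      (inner ℝ ((fderiv ℝ (gradient f) x) v) v : ℝ) ≤ β * ‖v‖^2)
    (hcrit : gradient f xstar = 0)
    (g : EuclideanSpace ℝ (Fin n))
    (hg : ‖g - gradient f xt‖ ≤ A * ‖xt - xstar‖ + B) :
    ‖(xt - η • g) - xstar‖
      ≤ (Real.sqrt (1 - 2 * η * α * β / (α + β)) + η * A) * ‖xt - xstar‖ + η * B := by
  have hab : 0 < α + β := by linarith
  have hη2 : η * (α + β) ≤ 2 := by
    have := (le_div_iff₀ hab).1 hη
    linarith
  set C := Real.sqrt (1 - 2 * η * α * β / (α + β)) with hCdef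
  have hC0 : 0 ≤ C := Real.sqrt_nonneg _
  have hkey1 : (1 - η * α) ^ 2 ≤ 1 - 2 * η * α * β / (α + β) := by
    have hd : 2 * η * α * β / (α + β) ≤ 2 * η * α - η ^ 2 * α ^ 2 := by
      rw [div_le_iff₀ hab]
      have h0 : 0 ≤ η * α ^ 2 * (2 - η * (α + β)) :=
        mul_nonneg (by positivity) (by linarith)
      nlinarith [h0]
    nlinarith
  have hkey2 : (η * β - 1) ^ 2 ≤ 1 - 2 * η * α * β / (α + β) := by
    have hd : 2 * η * α * β / (α + β) ≤ 2 * η * β - η ^ 2 * β ^ 2 := by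
      rw [div_le_iff₀ hab]
      have h0 : 0 ≤ η * β ^ 2 * (2 - η * (α + β)) :=
        mul_nonneg (by positivity) (by linarith)
      nlinarith [h0]
    nlinarith
  have hle1 : 1 - η * α ≤ C :=
    calc 1 - η * α ≤ |1 - η * α| := le_abs_self _
      _ = Real.sqrt ((1 - η * α) ^ 2) := (Real.sqrt_sq_eq_abs _).symm
      _ ≤ C := Real.sqrt_le_sqrt hkey1
  have hle2 : η * β - 1 ≤ C :=
    calc η * β - 1 ≤ |η * β - 1| := le_abs_self _
      _ = Real.sqrt ((η * β - 1) ^ 2) := (Real.sqrt_sq_eq_abs _).symm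
      _ ≤ C := Real.sqrt_le_sqrt hkey2
  have hsymm : ∀ x ∈ s, ∀ u w : EuclideanSpace ℝ (Fin n),
      ⟪(fderiv ℝ (gradient f) x) u, w⟫ = ⟪(fderiv ℝ (gradient f) x) w, u⟫ :=
    fun x hx => hessian_symm f x α hα (hdiff x hx) (hdiff2 x hx) (fun w => (hhess x hx w).1)
  have hP : ∀ x ∈ s,
      ‖ContinuousLinearMap.id ℝ (EuclideanSpace ℝ (Fin n)) - η • fderiv ℝ (gradient f) x‖ ≤ C := by
    intro x hx
    set H := fderiv ℝ (gradient f) x with hH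
    apply opnorm_le_of_symm_quadform _ C hC0
    · intro u w
      simp only [ContinuousLinearMap.sub_apply, ContinuousLinearMap.smul_apply,
        ContinuousLinearMap.id_apply, inner_sub_left, real_inner_smul_left]
      rw [hsymm x hx u w, real_inner_comm u w]
    · intro w
      have h1 := (hhess x hx w).1
      have h2 := (hhess x hx w).2
      have e : ⟪(ContinuousLinearMap.id ℝ (EuclideanSpace ℝ (Fin n)) - η • H) w, w⟫
          = ‖w‖ ^ 2 - η * ⟪H w, w⟫ := by
        simp only [ContinuousLinearMap.sub_apply, ContinuousLinearMap.smul_apply,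
          ContinuousLinearMap.id_apply, inner_sub_left, real_inner_smul_left,
          real_inner_self_eq_norm_sq]
      rw [e, abs_le]
      constructor
      · nlinarith [mul_le_mul_of_nonneg_left h2 hηpos.le,
          mul_nonneg (sub_nonneg.2 hle2) (sq_nonneg ‖w‖)]
      · nlinarith [mul_le_mul_of_nonneg_left h1 hηpos.le,
          mul_nonneg (sub_nonneg.2 hle1) (sq_nonneg ‖w‖)]
  set T := fun y : EuclideanSpace ℝ (Fin n) => y - η • gradient f y with hT
  have hmv : ‖T xt - T xstar‖ ≤ C * ‖xt - xstar‖ := by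
    have hder : ∀ x ∈ segment ℝ xt xstar, HasFDerivWithinAt T
        (ContinuousLinearMap.id ℝ (EuclideanSpace ℝ (Fin n)) - η • fderiv ℝ (gradient f) x)
        (segment ℝ xt xstar) x := by
      intro x hx
      exact ((hasFDerivAt_id x).sub
        (((hdiff2 x (hseg hx)).hasFDerivAt).const_smul η)).hasFDerivWithinAt
    exact (convex_segment xt xstar).norm_image_sub_le_of_norm_hasFDerivWithin_le hder
      (fun x hx => hP x (hseg hx))
      (right_mem_segment ℝ xt xstar) (left_mem_segment ℝ xt xstar)
  have hTstar : T xstar = xstar := by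
    show xstar - η • gradient f xstar = xstar
    rw [hcrit, smul_zero, sub_zero]
  have hdecomp : (xt - η • g) - xstar = (T xt - T xstar) - η • (g - gradient f xt) := by
    rw [hTstar]
    show xt - η • g - xstar = (xt - η • gradient f xt) - xstar - η • (g - gradient f xt)
    rw [smul_sub]
    abel
  calc ‖(xt - η • g) - xstar‖
      = ‖(T xt - T xstar) - η • (g - gradient f xt)‖ := by rw [hdecomp]
    _ ≤ ‖T xt - T xstar‖ + ‖η • (g - gradient f xt)‖ := norm_sub_le _ _
    _ ≤ C * ‖xt - xstar‖ + η * (A * ‖xt - xstar‖ + B) := by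
        refine add_le_add hmv ?_
        rw [norm_smul, Real.norm_eq_abs, abs_of_pos hηpos]
        exact mul_le_mul_of_nonneg_left hg hηpos.le
    _ = (C + η * A) * ‖xt - xstar‖ + η * B := by ring
end
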